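/- Let τ > 0, C ∈ ℂ, N ≥ 2 an integer, and γ_n = (n/τ + C)^N. If either 2τC is not an integer or N is odd, then for |n| sufficiently large there is no m ≠ n with γ_m = γ_n. -/

import Mathlib

open Polynomial

lemma key_16 (τ : ℝ) (hτ : 0 < τ) (C : ℂ) (N : ℕ) (hN : 2 ≤ N) (m n : ℤ) (hmn : m ≠ n)
    (heq : ((m : ℂ) / τ + C) ^ N = ((n : ℂ) / τ + C) ^ N) :
    ((m : ℝ) + n) = -(2 * τ * C.re) ∧
      (Polynomial.X ^ N - Polynomial.C ((-1 : ℂ) ^ N) *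
        (Polynomial.X + Polynomial.C ((starRingEnd ℂ) C - C)) ^ N).IsRoot ((n : ℂ) / τ + C) := by
  have hτ0 : (τ : ℝ) ≠ 0 := hτ.ne'
  have hare : ∀ j : ℤ, ((j : ℂ) / (τ : ℂ) + C).re = (j : ℝ) / τ + C.re := by
    intro j
    rw [Complex.add_re, show ((j : ℂ)) = (((j : ℝ)) : ℂ) by push_cast; ring,
      ← Complex.ofReal_div, Complex.ofReal_re]
  have haim : ∀ j : ℤ, ((j : ℂ) / (τ : ℂ) + C).im = C.im := by
    intro j
    rw [Complex.add_im, show ((j : ℂ)) = (((j : ℝ)) : ℂ) by push_cast; ring,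
      ← Complex.ofReal_div, Complex.ofReal_im, zero_add]
  -- equal normSq
  have h2 := congrArg Complex.normSq heq
  rw [map_pow, map_pow] at h2
  have hNS : Complex.normSq ((m : ℂ) / τ + C) = Complex.normSq ((n : ℂ) / τ + C) :=
    (pow_left_strictMonoOn₀ (n := N) (by omega)).injOn (Complex.normSq_nonneg _)
      (Complex.normSq_nonneg _) h2
  rw [Complex.normSq_apply, Complex.normSq_apply, hare, hare, haim, haim] at hNS
  have hsq : ((m : ℝ) / τ + C.re) * ((m : ℝ) / τ + C.re)
      = ((n : ℝ) / τ + C.re) * ((n : ℝ) / τ + C.re) := by nlinarith [hNS]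
  rcases mul_self_eq_mul_self_iff.1 hsq with hc | hc
  · exfalso
    apply hmn
    field_simp at hc
    exact_mod_cast (by linarith : (m : ℝ) = n)
  have hsum : ((m : ℝ) + n) = -(2 * τ * C.re) := by
    field_simp at hc ⊢; linarith
  refine ⟨hsum, ?_⟩
  -- a m = -(conj (a n))
  have ham : ((m : ℂ) / τ + C) = -((starRingEnd ℂ) ((n : ℂ) / τ + C)) := by
    apply Complex.ext
    · rw [hare, Complex.neg_re, Complex.conj_re, hare]; exact hc
    · rw [haim, Complex.neg_im, Complex.conj_im, haim]; ring
  have hconj : (starRingEnd ℂ) ((n : ℂ) / τ + C)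
      = ((n : ℂ) / τ + C) + ((starRingEnd ℂ) C - C) := by
    rw [map_add, map_div₀]
    simp
  simp only [IsRoot, eval_sub, eval_mul, eval_pow, eval_X, eval_C, eval_add]
  rw [← hconj, sub_eq_zero]
  calc ((n : ℂ) / τ + C) ^ N = ((m : ℂ) / τ + C) ^ N := heq.symm
    _ = (-((starRingEnd ℂ) ((n : ℂ) / τ + C))) ^ N := by rw [ham]
    _ = (-1 : ℂ) ^ N * ((starRingEnd ℂ) ((n : ℂ) / τ + C)) ^ N := by rw [neg_pow]

theorem stmt_16 (τ : ℝ) (hτ : 0 < τ) (C : ℂ) (N : ℕ) (hN : 2 ≤ N)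
    (h : (¬ ∃ k : ℤ, (k : ℂ) = 2 * τ * C) ∨ Odd N)
    (γ : ℤ → ℂ) (hγ : ∀ n : ℤ, γ n = ((n : ℂ) / τ + C) ^ N) :
    ∃ n₀ : ℕ, ∀ n : ℤ, n₀ ≤ n.natAbs → ∀ m : ℤ, m ≠ n → γ m ≠ γ n := by
  by_cases hk : ∃ k : ℤ, (k : ℝ) = 2 * τ * C.re
  · -- hard case
    set D : ℂ := (starRingEnd ℂ) C - C with hD
    set P : ℂ[X] := Polynomial.X ^ N - Polynomial.C ((-1 : ℂ) ^ N)
        * (Polynomial.X + Polynomial.C D) ^ N with hPdef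
    have hP : P ≠ 0 := by
      rcases Nat.even_or_odd N with hNe | hNo
      · -- even: need C.im ≠ 0
        have him : C.im ≠ 0 := by
          intro him0
          rcases h with hL | hO
          · obtain ⟨k, hk'⟩ := hk
            apply hL
            refine ⟨k, ?_⟩
            apply Complex.ext
            · simpa [Complex.mul_re, him0] using hk'
            · simp [Complex.mul_im, him0]
          · exact Nat.not_odd_iff_even.mpr hNe hO
        have hD0 : D ≠ 0 := by
          intro h0
          apply him
          have : D.im = 0 := by rw [h0]; simp
          simp [hD, Complex.sub_im, Complex.conj_im] at this
          linarith
        intro h0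
        have hco : P.coeff (N - 1) = -(D * N) := by
          rw [hPdef, coeff_sub, coeff_C_mul, coeff_X_pow, coeff_X_add_C_pow,
            if_neg (by omega : ¬ N - 1 = N), hNe.neg_one_pow,
            show N - (N - 1) = 1 by omega]
          have hch : N.choose (N - 1) = N := by
            rw [Nat.choose_symm (by omega : 1 ≤ N), Nat.choose_one_right]
          rw [hch]
          ring
        rw [h0] at hco
        simp at hco
        rcases hco with h1 | h1
        · exact hD0 h1
        · exact absurd h1 (by positivity)
      · intro h0
        have hco : P.coeff N = 2 := by
          rw [hPdef, coeff_sub, coeff_C_mul, coeff_X_pow, if_pos rfl, hNo.neg_one_pow]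
          have hm : ((Polynomial.X + Polynomial.C D) ^ N).coeff N = 1 := by
            rw [coeff_X_add_C_pow, Nat.sub_self, pow_zero, one_mul, Nat.choose_self,
              Nat.cast_one]
          rw [hm]; ring
        rw [h0] at hco
        simp at hco
    have hroots : {z : ℂ | P.IsRoot z}.Finite := P.finite_setOf_isRoot hP
    have hinj : Function.Injective (fun j : ℤ => ((j : ℂ) / τ + C)) := by
      intro a b hab
      have := congrArg Complex.re hab
      simp only [Complex.add_re] at this
      have h2 : ((a : ℂ) / τ).re = ((b : ℂ) / τ).re := by linarith
      rw [show ((a : ℂ)) = (((a : ℝ)) : ℂ) by push_cast; ring,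
        show ((b : ℂ)) = (((b : ℝ)) : ℂ) by push_cast; ring,
        ← Complex.ofReal_div, ← Complex.ofReal_div, Complex.ofReal_re,
        Complex.ofReal_re] at h2
      field_simp at h2
      exact_mod_cast h2
    have hS : {j : ℤ | P.IsRoot ((j : ℂ) / τ + C)}.Finite :=
      Set.Finite.preimage hinj.injOn hroots
    obtain ⟨b, hb⟩ := (hS.image Int.natAbs).bddAbove
    refine ⟨b + 1, ?_⟩
    intro n hn m hm heq'
    rw [hγ m, hγ n] at heq'
    obtain ⟨-, hroot⟩ := key_16 τ hτ C N hN m n hm heq'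
    have : n.natAbs ∈ Int.natAbs '' {j : ℤ | P.IsRoot ((j : ℂ) / τ + C)} :=
      ⟨n, hroot, rfl⟩
    have := hb this
    omega
  · refine ⟨0, ?_⟩
    intro n _ m hm heq'
    rw [hγ m, hγ n] at heq'
    obtain ⟨hsum, -⟩ := key_16 τ hτ C N hN m n hm heq'
    exact hk ⟨-(m + n), by push_cast; linarith⟩
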